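/- Let J ⊆ ℝ be a nonempty open interval on which r·1 − b is invertible, let k ∈ ℝ, and let N : ℝ → Matrix (Fin m) (Fin m) ℝ be differentiable on J with N'(r) = −N(r)·ρ(r) − k·1 for all r ∈ J. Then there exists a constant m×m real matrix n₀ such that N(r) = ( −(k/2)·r²·1 + k·r·b + n₀ )·ρ(r) for all r ∈ J. -/

import Mathlib

open Matrix

/-- **Integration of the Ricci identity `DN_{ij} = -N_{ik}ρ_{kj} - R̃ δ_{ij}`.**
With `ρ(r) = (r·1 - b)⁻¹` on a nonempty open interval `J` where `r·1 - b` is invertible,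
any matrix solution of `N' = -N·ρ - k·1` has the form
`N(r) = (-(k/2)·r²·1 + k·r·b + n₀)·ρ(r)` for a constant matrix `n₀`. -/
theorem integrated_ricci_Nij
    (m : ℕ) (hm : 1 ≤ m) (b : Matrix (Fin m) (Fin m) ℝ) (k : ℝ)
    (J : Set ℝ) (hJopen : IsOpen J) (hJconn : J.OrdConnected) (hJne : J.Nonempty)
    (hinv : ∀ r ∈ J, IsUnit (r • (1 : Matrix (Fin m) (Fin m) ℝ) - b))
    (N : ℝ → Matrix (Fin m) (Fin m) ℝ)
    (hder : ∀ r ∈ J, ∀ i j, HasDerivAt (fun s => N s i j)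
      ((-(N r * (r • (1 : Matrix (Fin m) (Fin m) ℝ) - b)⁻¹)
          - k • (1 : Matrix (Fin m) (Fin m) ℝ)) i j) r) :
    ∃ n₀ : Matrix (Fin m) (Fin m) ℝ, ∀ r ∈ J,
      N r = ((-(k / 2) * r ^ 2) • (1 : Matrix (Fin m) (Fin m) ℝ) + (k * r) • b + n₀)
              * (r • (1 : Matrix (Fin m) (Fin m) ℝ) - b)⁻¹ := by
  set G : ℝ → Matrix (Fin m) (Fin m) ℝ := fun r =>
    N r * (r • (1 : Matrix (Fin m) (Fin m) ℝ) - b)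
      + ((k / 2) * r ^ 2) • (1 : Matrix (Fin m) (Fin m) ℝ) - (k * r) • b with hG
  -- each entry of G has derivative 0 on J
  have hGder : ∀ r ∈ J, ∀ i j, HasDerivAt (fun s => G s i j) 0 r := by
    intro r hr i j
    have hdet : IsUnit (r • (1 : Matrix (Fin m) (Fin m) ℝ) - b).det :=
      (Matrix.isUnit_iff_isUnit_det _).mp (hinv r hr)
    set D : Matrix (Fin m) (Fin m) ℝ :=
      -(N r * (r • (1 : Matrix (Fin m) (Fin m) ℝ) - b)⁻¹)
        - k • (1 : Matrix (Fin m) (Fin m) ℝ) with hD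
    have hsum : HasDerivAt (fun s => (N s * (s • (1 : Matrix (Fin m) (Fin m) ℝ) - b)) i j)
        ((D * (r • (1 : Matrix (Fin m) (Fin m) ℝ) - b)) i j
          + (N r * (1 : Matrix (Fin m) (Fin m) ℝ)) i j) r := by
      have : (fun s => (N s * (s • (1 : Matrix (Fin m) (Fin m) ℝ) - b)) i j)
          = fun s => ∑ l, N s i l * (s * (1 : Matrix (Fin m) (Fin m) ℝ) l j - b l j) := by
        funext s
        simp [Matrix.mul_apply, Matrix.sub_apply, Matrix.smul_apply, smul_eq_mul]
      rw [this]
      have hmul : (D * (r • (1 : Matrix (Fin m) (Fin m) ℝ) - b)) i j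
          + (N r * (1 : Matrix (Fin m) (Fin m) ℝ)) i j
          = ∑ l, (D i l * (r * (1 : Matrix (Fin m) (Fin m) ℝ) l j - b l j)
              + N r i l * (1 : Matrix (Fin m) (Fin m) ℝ) l j) := by
        rw [Finset.sum_add_distrib]
        simp [Matrix.mul_apply, Matrix.sub_apply, Matrix.smul_apply, smul_eq_mul]
      rw [hmul]
      apply HasDerivAt.fun_sum
      intro l _
      have h1 : HasDerivAt (fun s : ℝ => s * (1 : Matrix (Fin m) (Fin m) ℝ) l j - b l j)
          ((1 : Matrix (Fin m) (Fin m) ℝ) l j) r := by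
        simpa using ((hasDerivAt_id r).mul_const ((1 : Matrix (Fin m) (Fin m) ℝ) l j)).sub_const
          (b l j)
      have h2 := (hder r hr i l).mul h1
      rw [← hD] at h2
      convert h2 using 1
      all_goals rfl
    have hquad : HasDerivAt (fun s : ℝ =>
        (((k / 2) * s ^ 2) • (1 : Matrix (Fin m) (Fin m) ℝ)) i j
          - ((k * s) • b) i j)
        ((k * r) * (1 : Matrix (Fin m) (Fin m) ℝ) i j - k * b i j) r := by
      have hq1 : HasDerivAt (fun s : ℝ => ((k / 2) * s ^ 2) * (1 : Matrix (Fin m) (Fin m) ℝ) i j)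
          ((k * r) * (1 : Matrix (Fin m) (Fin m) ℝ) i j) r := by
        have := ((hasDerivAt_pow 2 r).const_mul (k / 2)).mul_const
          ((1 : Matrix (Fin m) (Fin m) ℝ) i j)
        convert this using 1
        · rfl
        · rfl
        ring
      have hq2 : HasDerivAt (fun s : ℝ => (k * s) * b i j) (k * b i j) r := by
        have := ((hasDerivAt_id r).const_mul k).mul_const (b i j)
        convert this using 1
        · rfl
        · rfl
        · rfl
        ring
      simp only [Matrix.smul_apply, smul_eq_mul]
      exact hq1.sub hq2
    have hGij : (fun s => G s i j) = fun s =>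
        (N s * (s • (1 : Matrix (Fin m) (Fin m) ℝ) - b)) i j
          + ((((k / 2) * s ^ 2) • (1 : Matrix (Fin m) (Fin m) ℝ)) i j - ((k * s) • b) i j) := by
      funext s
      simp [hG, Matrix.sub_apply, Matrix.add_apply]
      ring
    rw [hGij]
    have htot := hsum.add hquad
    convert htot using 1
    · rfl
    · rfl
    · rfl
    -- show the total derivative is 0
    have hρ : (r • (1 : Matrix (Fin m) (Fin m) ℝ) - b)⁻¹
        * (r • (1 : Matrix (Fin m) (Fin m) ℝ) - b) = 1 := Matrix.nonsing_inv_mul _ hdet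
    have hDmul : D * (r • (1 : Matrix (Fin m) (Fin m) ℝ) - b)
        = -(N r) - (k * r) • (1 : Matrix (Fin m) (Fin m) ℝ) + k • b := by
      rw [hD, sub_mul, neg_mul, Matrix.mul_assoc, hρ, Matrix.mul_one, smul_mul, one_mul,
        smul_sub, smul_smul]
      abel
    rw [hDmul]
    simp [Matrix.add_apply, Matrix.sub_apply, Matrix.neg_apply, Matrix.smul_apply, smul_eq_mul]
    ring
  obtain ⟨r₀, hr₀⟩ := hJne
  have hconv : Convex ℝ J := hJconn.convex
  have hconst : ∀ r ∈ J, G r = G r₀ := by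
    intro r hr
    ext i j
    have hdiff : DifferentiableOn ℝ (fun s => G s i j) J := fun x hx =>
      (hGder x hx i j).differentiableAt.differentiableWithinAt
    have hfd : ∀ x ∈ J, fderivWithin ℝ (fun s => G s i j) J x = 0 := by
      intro x hx
      rw [fderivWithin_of_isOpen hJopen hx, (hGder x hx i j).hasFDerivAt.fderiv]
      exact ContinuousLinearMap.ext fun t => by simp
    exact hconv.is_const_of_fderivWithin_eq_zero hdiff hfd hr hr₀
  refine ⟨G r₀, fun r hr => ?_⟩
  have hdet : IsUnit (r • (1 : Matrix (Fin m) (Fin m) ℝ) - b).det :=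
    (Matrix.isUnit_iff_isUnit_det _).mp (hinv r hr)
  have hρ : (r • (1 : Matrix (Fin m) (Fin m) ℝ) - b)
      * (r • (1 : Matrix (Fin m) (Fin m) ℝ) - b)⁻¹ = 1 := Matrix.mul_nonsing_inv _ hdet
  have hNG : N r * (r • (1 : Matrix (Fin m) (Fin m) ℝ) - b)
      = (-(k / 2) * r ^ 2) • (1 : Matrix (Fin m) (Fin m) ℝ) + (k * r) • b + G r₀ := by
    rw [← hconst r hr]
    have hGr : G r = N r * (r • (1 : Matrix (Fin m) (Fin m) ℝ) - b)
        + ((k / 2) * r ^ 2) • (1 : Matrix (Fin m) (Fin m) ℝ) - (k * r) • b := rfl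
    rw [hGr]
    have hneg : ((-(k / 2) * r ^ 2) : ℝ) = -((k / 2) * r ^ 2) := by ring
    rw [hneg, neg_smul]
    abel
  calc N r = N r * ((r • (1 : Matrix (Fin m) (Fin m) ℝ) - b)
      * (r • (1 : Matrix (Fin m) (Fin m) ℝ) - b)⁻¹) := by rw [hρ, Matrix.mul_one]
    _ = (N r * (r • (1 : Matrix (Fin m) (Fin m) ℝ) - b))
        * (r • (1 : Matrix (Fin m) (Fin m) ℝ) - b)⁻¹ := by rw [Matrix.mul_assoc]
    _ = _ := by rw [hNG]
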